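/- SDP reformulation for the CIR process confidence bound: Let δ > 0, σ > 0, ρ > 0 and θ' > 0 be real numbers. Then the minimum of (δσ²/2)·ϑ² over ϑ > 0 subject to ϑ²θ'² − 2ϑ(θ' + σ²ρ/δ) + 1 ≤ 0 equals the maximum of γ over real numbers γ ≥ 0 and λ ≥ 0 such that the symmetric 2×2 matrix with entries M₁₁ = δσ²/2 + λθ'², M₁₂ = M₂₁ = −λ(θ' + σ²ρ/δ), M₂₂ = λ − γ is positive semidefinite. (In particular the positivity constraint ϑ > 0 may be relaxed to ϑ ∈ ℝ without changing the optimal value, since ϑ = 1/θ' is strictly feasible and strong Lagrangian duality holds.) -/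

import Mathlib

set_option autoImplicit false
set_option maxHeartbeats 1000000

/-- SDP reformulation for the CIR-process confidence bound: for
`δ, σ, ρ, θ' > 0`, the minimum of `(δσ²/2)ϑ²` over `ϑ > 0` with
`ϑ²θ'² − 2ϑ(θ' + σ²ρ/δ) + 1 ≤ 0` equals the maximum of `γ` over `γ ≥ 0`, `λ ≥ 0` such
that the symmetric matrix `[[δσ²/2 + λθ'², −λ(θ' + σ²ρ/δ)], [−λ(θ' + σ²ρ/δ), λ − γ]]` is
positive semidefinite; moreover the positivity constraint `ϑ > 0` may be relaxed to
`ϑ ∈ ℝ` without changing the optimal value. -/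
theorem stmt19 (δ σ ρ θ' : ℝ) (hδ : 0 < δ) (hσ : 0 < σ) (hρ : 0 < ρ) (hθ' : 0 < θ') :
    ∃ v : ℝ,
      IsLeast {w : ℝ | ∃ ϑ : ℝ, 0 < ϑ ∧
        ϑ ^ 2 * θ' ^ 2 - 2 * ϑ * (θ' + σ ^ 2 * ρ / δ) + 1 ≤ 0 ∧
        w = δ * σ ^ 2 / 2 * ϑ ^ 2} v ∧
      IsGreatest {γ : ℝ | 0 ≤ γ ∧ ∃ lam : ℝ, 0 ≤ lam ∧
        Matrix.PosSemidef
          !![δ * σ ^ 2 / 2 + lam * θ' ^ 2, -(lam * (θ' + σ ^ 2 * ρ / δ));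
             -(lam * (θ' + σ ^ 2 * ρ / δ)), lam - γ]} v ∧
      IsLeast {w : ℝ | ∃ ϑ : ℝ,
        ϑ ^ 2 * θ' ^ 2 - 2 * ϑ * (θ' + σ ^ 2 * ρ / δ) + 1 ≤ 0 ∧
        w = δ * σ ^ 2 / 2 * ϑ ^ 2} v := by
  set a := δ * σ ^ 2 / 2 with ha_def
  set b := θ' + σ ^ 2 * ρ / δ with hb_def
  have ha : 0 < a := by rw [ha_def]; positivity
  have hb : θ' < b := by
    have h : 0 < σ ^ 2 * ρ / δ := by positivity
    rw [hb_def]; linarith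
  have hb0 : 0 < b := lt_trans hθ' hb
  have hθ2 : (0:ℝ) < θ' ^ 2 := by positivity
  have hD : 0 < b ^ 2 - θ' ^ 2 := by nlinarith
  set s := Real.sqrt (b ^ 2 - θ' ^ 2) with hs_def
  have hs2 : s ^ 2 = b ^ 2 - θ' ^ 2 := Real.sq_sqrt hD.le
  have hs : 0 < s := Real.sqrt_pos.mpr hD
  have hsb : s < b := by nlinarith
  set t := (b - s) / θ' ^ 2 with ht_def
  have ht : 0 < t := div_pos (by linarith) hθ2
  have hts : θ' ^ 2 * t = b - s := by
    rw [ht_def]; field_simp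
  have htbs : t * (b + s) = 1 := by
    rw [ht_def]; field_simp; linear_combination -hs2
  have hconstr : t ^ 2 * θ' ^ 2 - 2 * t * b + 1 = 0 := by
    linear_combination t * hts - htbs
  set lam0 := a * t / s with hlam_def
  have hlam : 0 < lam0 := by rw [hlam_def]; positivity
  have hls : lam0 * s = a * t := by
    rw [hlam_def]; field_simp
  set v := a * t ^ 2 with hv_def
  have i1 : lam0 * b = (a + lam0 * θ' ^ 2) * t := by
    linear_combination -lam0 * hts + hls
  have i2 : lam0 - v = (a + lam0 * θ' ^ 2) * t ^ 2 := by
    linear_combination lam0 * hconstr + (-2*lam0*t) * hts + (2*t) * hls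
  have hc : 0 < a + lam0 * θ' ^ 2 := by positivity
  clear_value a b s t lam0 v
  have hlow : ∀ ϑ : ℝ, ϑ ^ 2 * θ' ^ 2 - 2 * ϑ * b + 1 ≤ 0 → t ≤ ϑ := by
    intro ϑ hϑ
    by_contra h
    push_neg at h
    have h2 : θ' ^ 2 * ϑ < b + s := by nlinarith [mul_lt_mul_of_pos_left h hθ2]
    have h3 : θ' ^ 2 * t * ϑ = (b - s) * ϑ := by linear_combination ϑ * hts
    nlinarith [mul_pos (sub_pos.mpr h) (sub_pos.mpr h2), htbs, h3]
  refine ⟨v, ⟨⟨t, ht, by linarith [hconstr], hv_def⟩, ?_⟩, ⟨⟨le_of_lt (by rw [hv_def]; exact mul_pos ha (pow_pos ht 2)), lam0, hlam.le, ?_⟩, ?_⟩,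
    ⟨⟨t, by linarith [hconstr], hv_def⟩, ?_⟩⟩
  · rintro w ⟨ϑ, hϑ0, hϑ, rfl⟩
    have hle := hlow ϑ hϑ
    rw [hv_def]
    nlinarith [mul_nonneg (sub_nonneg.mpr hle) (by linarith : (0:ℝ) ≤ ϑ + t), ha]
  · refine Matrix.posSemidef_iff_dotProduct_mulVec.mpr ⟨?_, ?_⟩
    · ext i j
      fin_cases i <;> fin_cases j <;>
        simp [Matrix.conjTranspose, Matrix.vecHead, Matrix.vecTail]
    · intro x
      have hsq := mul_nonneg hc.le (sq_nonneg (x 0 - t * x 1))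
      have e1 : lam0 * b * (x 0 * x 1) = (a + lam0 * θ' ^ 2) * t * (x 0 * x 1) := by
        rw [i1]
      have e2 : (lam0 - v) * x 1 ^ 2 = (a + lam0 * θ' ^ 2) * t ^ 2 * x 1 ^ 2 := by
        rw [i2]
      simp [Matrix.mulVec, dotProduct, Fin.sum_univ_two]
      nlinarith [e1, e2, hsq]
  · rintro γ ⟨hγ0, lam', hlam', hM⟩
    have h := hM.dotProduct_mulVec_nonneg ![t, 1]
    simp [Matrix.mulVec, dotProduct, Fin.sum_univ_two] at h
    have hz : lam' * (t ^ 2 * θ' ^ 2 - 2 * t * b + 1) = 0 := by rw [hconstr]; ring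
    rw [hv_def]; nlinarith [h, hz]
  · rintro w ⟨ϑ, hϑ, rfl⟩
    have hle := hlow ϑ hϑ
    have hϑ0 : 0 < ϑ := lt_of_lt_of_le ht hle
    rw [hv_def]
    nlinarith [mul_nonneg (sub_nonneg.mpr hle) (by linarith : (0:ℝ) ≤ ϑ + t), ha]
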